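/- Let l be a positive natural number, γ > 0, d₀ > 0, and let x_i, x_j : ℝ → ℝ^l be differentiable. Define r : ℝ → ℝ by r(t) = ‖x_i(t) − x_j(t)‖². Suppose ‖x_i(0) − x_j(0)‖ ≥ d₀ and deriv r t ≥ −γ · (r(t) − d₀²) for all t ≥ 0. Then ‖x_i(t) − x_j(t)‖ ≥ d₀ for all t ≥ 0. -/

import Mathlib

/-- Inter-agent collision avoidance from the distance-based CBF
`h = ‖x_i - x_j‖² - d₀²` with linear class-K∞ function `α(s) = γ s`: if the CBF
condition holds along the trajectories and the agents start at distance at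
least `d₀`, they never get closer than `d₀`. -/
theorem collision_avoidance (l : ℕ) (hl : 0 < l) (γ d₀ : ℝ)
    (hγ : 0 < γ) (hd₀ : 0 < d₀)
    (xi xj : ℝ → EuclideanSpace ℝ (Fin l))
    (hxi : Differentiable ℝ xi) (hxj : Differentiable ℝ xj)
    (r : ℝ → ℝ) (hr : ∀ t, r t = ‖xi t - xj t‖ ^ 2)
    (h0 : d₀ ≤ ‖xi 0 - xj 0‖)
    (hcbf : ∀ t ≥ (0 : ℝ), deriv r t ≥ -γ * (r t - d₀ ^ 2)) :
    ∀ t ≥ (0 : ℝ), d₀ ≤ ‖xi t - xj t‖ := by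
  have hrdiff : Differentiable ℝ r := by
    have : Differentiable ℝ (fun t => ‖xi t - xj t‖ ^ 2) := by
      have h1 : Differentiable ℝ (fun t => xi t - xj t) := hxi.sub hxj
      have h2 : Differentiable ℝ (fun t =>
          (inner ℝ (xi t - xj t) (xi t - xj t) : ℝ)) :=
        Differentiable.inner (𝕜 := ℝ) h1 h1
      simp only [real_inner_self_eq_norm_sq] at h2
      exact h2
    have : r = fun t => ‖xi t - xj t‖ ^ 2 := funext hr
    rwa [this]
  set g : ℝ → ℝ := fun t => Real.exp (γ * t) * (r t - d₀ ^ 2) with hg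
  have hgdiff : Differentiable ℝ g := by
    apply Differentiable.mul
    · exact (Real.differentiable_exp.comp
        ((differentiable_const γ).mul differentiable_id))
    · exact hrdiff.sub (differentiable_const _)
  have hgmono : MonotoneOn g (Set.Ici (0 : ℝ)) := by
    apply monotoneOn_of_deriv_nonneg (convex_Ici 0) hgdiff.continuous.continuousOn
      (fun t _ => (hgdiff t).differentiableWithinAt)
    intro t ht
    simp only [interior_Ici, Set.mem_Ioi] at ht
    have hd : deriv g t = γ * Real.exp (γ * t) * (r t - d₀ ^ 2)
        + Real.exp (γ * t) * deriv r t := by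
      have he : HasDerivAt (fun t => Real.exp (γ * t)) (γ * Real.exp (γ * t)) t := by
        have := (Real.hasDerivAt_exp (γ * t)).comp t
          ((hasDerivAt_id t).const_mul γ)
        simpa [mul_comm, Function.comp_def] using this
      have hrd : HasDerivAt (fun t => r t - d₀ ^ 2) (deriv r t) t := by
        simpa using ((hrdiff t).hasDerivAt.sub_const (d₀ ^ 2))
      have := he.mul hrd
      simpa [hg, Pi.mul_def, mul_comm, mul_left_comm, mul_assoc] using this.deriv
    rw [hd]
    have hc := hcbf t ht.le
    have hexp : (0 : ℝ) < Real.exp (γ * t) := Real.exp_pos _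
    nlinarith [hexp]
  intro t ht
  have hg0 : 0 ≤ g 0 := by
    have : d₀ ^ 2 ≤ r 0 := by
      rw [hr]
      have := norm_nonneg (xi 0 - xj 0)
      nlinarith
    simp [hg]
    nlinarith
  have hgt : 0 ≤ g t := le_trans hg0 (hgmono Set.self_mem_Ici ht ht)
  have hgt' : 0 ≤ Real.exp (γ * t) * (r t - d₀ ^ 2) := hgt
  have hrt : d₀ ^ 2 ≤ r t := by
    have hexp : (0 : ℝ) < Real.exp (γ * t) := Real.exp_pos _
    nlinarith [hgt']
  rw [hr] at hrt
  nlinarith [norm_nonneg (xi t - xj t)]
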